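/- Let f_0 be a Schwartz function on ℝ⁺. For every n ∈ ℕ, the n-th derivative ∂_s^n [ f_0(t² s(s+1)) ] is, for all t > 0 and s ≥ 0, a finite linear combination (with coefficients independent of t and s) of terms of the form t^{2i} s^{j} F(t² s(s+1)), where each F is a Schwartz function on ℝ⁺ and the integers i, j ≥ 0 satisfy 2i − j ≥ n. -/

import Mathlib

open Real Finset

private def SRep (n : ℕ) (g : ℝ → ℝ → ℝ) : Prop :=
  ∃ (m : ℕ) (c : Fin m → ℝ) (i j : Fin m → ℕ) (F : Fin m → SchwartzMap ℝ ℝ),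
    (∀ k : Fin m, n + j k ≤ 2 * i k) ∧
    ∀ t s : ℝ, g t s = ∑ k : Fin m, c k * t ^ (2 * i k) * s ^ (j k) * F k (t ^ 2 * (s * (s + 1)))

private lemma SRep.congr {n : ℕ} {g g' : ℝ → ℝ → ℝ} (h : SRep n g)
    (he : ∀ t s, g' t s = g t s) : SRep n g' := by
  obtain ⟨m, c, i, j, F, hk, heq⟩ := h
  exact ⟨m, c, i, j, F, hk, fun t s => (he t s).trans (heq t s)⟩

private lemma SRep.add {n : ℕ} {g₁ g₂ : ℝ → ℝ → ℝ} (h₁ : SRep n g₁) (h₂ : SRep n g₂) :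
    SRep n (fun t s => g₁ t s + g₂ t s) := by
  obtain ⟨m₁, c₁, i₁, j₁, F₁, hk₁, he₁⟩ := h₁
  obtain ⟨m₂, c₂, i₂, j₂, F₂, hk₂, he₂⟩ := h₂
  refine ⟨m₁ + m₂, Fin.addCases c₁ c₂, Fin.addCases i₁ i₂, Fin.addCases j₁ j₂,
    Fin.addCases F₁ F₂, ?_, ?_⟩
  · intro k
    refine Fin.addCases (fun k => ?_) (fun k => ?_) k <;> simp [hk₁, hk₂]
  · intro t s
    rw [Fin.sum_univ_add]
    simp only [Fin.addCases_left, Fin.addCases_right, he₁, he₂]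

private lemma term_hasDerivAt (c : ℝ) (i j : ℕ) (F : SchwartzMap ℝ ℝ) (t s : ℝ) :
    HasDerivAt (fun s' : ℝ => c * t ^ (2 * i) * s' ^ j * F (t ^ 2 * (s' * (s' + 1))))
      ((c * j) * t ^ (2 * i) * s ^ (j - 1) * F (t ^ 2 * (s * (s + 1)))
        + (2 * c) * t ^ (2 * (i + 1)) * s ^ (j + 1)
            * (SchwartzMap.derivCLM ℝ ℝ F) (t ^ 2 * (s * (s + 1)))
        + c * t ^ (2 * (i + 1)) * s ^ j
            * (SchwartzMap.derivCLM ℝ ℝ F) (t ^ 2 * (s * (s + 1)))) s := by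
  have hu : HasDerivAt (fun s' : ℝ => t ^ 2 * (s' * (s' + 1))) (t ^ 2 * (2 * s + 1)) s := by
    have h : HasDerivAt (fun s' : ℝ => s' * (s' + 1)) (2 * s + 1) s := by
      have h1 := (hasDerivAt_id s).mul ((hasDerivAt_id s).add_const 1)
      refine h1.congr_deriv ?_; simp only [id_eq]; ring
    exact h.const_mul (t ^ 2)
  have hF : HasDerivAt (fun s' : ℝ => F (t ^ 2 * (s' * (s' + 1))))
      (deriv F (t ^ 2 * (s * (s + 1))) * (t ^ 2 * (2 * s + 1))) s :=
    (F.differentiable.differentiableAt.hasDerivAt).comp s hu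
  have hpow : HasDerivAt (fun s' : ℝ => s' ^ j) ((j : ℝ) * s ^ (j - 1)) s := hasDerivAt_pow j s
  have h := (hpow.mul hF).const_mul (c * t ^ (2 * i))
  have hfe : (fun s' : ℝ => c * t ^ (2 * i) * s' ^ j * F (t ^ 2 * (s' * (s' + 1))))
      = fun s' : ℝ => c * t ^ (2 * i) * (s' ^ j * F (t ^ 2 * (s' * (s' + 1)))) := by
    funext s'; ring
  rw [hfe]
  refine h.congr_deriv ?_
  simp only [SchwartzMap.derivCLM_apply]
  ring

private lemma SRep.deriv {n : ℕ} {g : ℝ → ℝ → ℝ} (h : SRep n g) :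
    SRep (n + 1) (fun t s => deriv (g t) s) := by
  obtain ⟨m, c, i, j, F, hk, heq⟩ := h
  set u : ℝ → ℝ → ℝ := fun t s => t ^ 2 * (s * (s + 1)) with hu
  -- the three pieces
  have h₁ : SRep (n + 1) (fun t s => ∑ k : Fin m,
      (if j k = 0 then (0 : ℝ) else c k * j k) * t ^ (2 * (if j k = 0 then n + 1 else i k))
        * s ^ (j k - 1) * F k (u t s)) := by
    refine ⟨m, fun k => if j k = 0 then 0 else c k * j k,
      fun k => if j k = 0 then n + 1 else i k, fun k => j k - 1, F, ?_, fun t s => rfl⟩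
    intro k
    dsimp only
    by_cases hj : j k = 0
    · simp [hj]
    · have := hk k
      simp only [hj, if_false]
      omega
  have h₂ : SRep (n + 1) (fun t s => ∑ k : Fin m,
      (2 * c k) * t ^ (2 * (i k + 1)) * s ^ (j k + 1)
        * (SchwartzMap.derivCLM ℝ ℝ (F k)) (u t s)) := by
    refine ⟨m, fun k => 2 * c k, fun k => i k + 1, fun k => j k + 1,
      fun k => SchwartzMap.derivCLM ℝ ℝ (F k), ?_, fun t s => rfl⟩
    intro k; dsimp only; have := hk k; omega
  have h₃ : SRep (n + 1) (fun t s => ∑ k : Fin m,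
      c k * t ^ (2 * (i k + 1)) * s ^ (j k)
        * (SchwartzMap.derivCLM ℝ ℝ (F k)) (u t s)) := by
    refine ⟨m, c, fun k => i k + 1, j, fun k => SchwartzMap.derivCLM ℝ ℝ (F k), ?_, fun t s => rfl⟩
    intro k; dsimp only; have := hk k; omega
  refine ((h₁.add h₂).add h₃).congr ?_
  intro t s
  have hg : g t = fun s' : ℝ => ∑ k : Fin m,
      c k * t ^ (2 * i k) * s' ^ (j k) * F k (u t s') := funext fun s' => heq t s'
  rw [hg]
  have hd : HasDerivAt (fun s' : ℝ => ∑ k : Fin m,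
      c k * t ^ (2 * i k) * s' ^ (j k) * F k (u t s'))
      (∑ k : Fin m, ((c k * j k) * t ^ (2 * i k) * s ^ (j k - 1) * F k (u t s)
        + (2 * c k) * t ^ (2 * (i k + 1)) * s ^ (j k + 1)
            * (SchwartzMap.derivCLM ℝ ℝ (F k)) (u t s)
        + c k * t ^ (2 * (i k + 1)) * s ^ (j k)
            * (SchwartzMap.derivCLM ℝ ℝ (F k)) (u t s))) s :=
    HasDerivAt.fun_sum fun k _ => term_hasDerivAt (c k) (i k) (j k) (F k) t s
  rw [hd.deriv, Finset.sum_add_distrib, Finset.sum_add_distrib]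
  congr 1
  congr 1
  apply Finset.sum_congr rfl
  intro k _
  by_cases hj : j k = 0 <;> simp [hj]

theorem stmt8 (f₀ : SchwartzMap ℝ ℝ) :
    ∀ n : ℕ, ∃ (m : ℕ) (c : Fin m → ℝ) (i j : Fin m → ℕ) (F : Fin m → SchwartzMap ℝ ℝ),
      (∀ k : Fin m, n + j k ≤ 2 * i k) ∧
      ∀ t : ℝ, 0 < t → ∀ s : ℝ, 0 ≤ s →
        iteratedDeriv n (fun s' : ℝ => f₀ (t ^ 2 * (s' * (s' + 1)))) s =
          ∑ k : Fin m, c k * t ^ (2 * i k) * s ^ (j k) * F k (t ^ 2 * (s * (s + 1))) := by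
  have key : ∀ n : ℕ, SRep n (fun t s =>
      iteratedDeriv n (fun s' : ℝ => f₀ (t ^ 2 * (s' * (s' + 1)))) s) := by
    intro n
    induction n with
    | zero =>
      refine ⟨1, fun _ => 1, fun _ => 0, fun _ => 0, fun _ => f₀, by simp, ?_⟩
      intro t s; simp [iteratedDeriv_zero]
    | succ n ih =>
      refine ih.deriv.congr ?_
      intro t s
      rw [iteratedDeriv_succ]
  intro n
  obtain ⟨m, c, i, j, F, hk, heq⟩ := key n
  exact ⟨m, c, i, j, F, hk, fun t _ s _ => heq t s⟩
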